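/- (Theorem 3 structure) Let r̂ ∈ ℝ³ be a unit vector, λ > 0, N ≥ 1, L > 0, and let c = (1/‖r_e‖ − 1/‖r_u‖) > 0 with cL² < λ. Define g(a) = |∑_{n=1}^{N} exp(j·(π/λ)·c·(n²/N²)·a)| for a ∈ [0, L²]. Then g is decreasing on [0, L²], and hence the minimum over t with ‖t‖ = L of the same-direction correlation f_sd(t) = g(L² − (r̂^T t)²) equals g(L²) = |∑_{n=1}^{N} exp(j·(π/λ)·c·(n²/N²)·L²)|, attained when r̂^T t = 0. -/

import Mathlib

open Real

private lemma abs_sq_sum_exp (s : Finset ℕ) (θ : ℕ → ℝ) :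
    (‖∑ n ∈ s, Complex.exp (Complex.I * (θ n : ℝ))‖)^2
      = ∑ n ∈ s, ∑ m ∈ s, Real.cos (θ n - θ m) := by
  set z := ∑ n ∈ s, Complex.exp (Complex.I * (θ n : ℝ)) with hz
  have h1 : z * (starRingEnd ℂ) z
      = ∑ n ∈ s, ∑ m ∈ s, Complex.exp (Complex.I * ((θ n - θ m : ℝ) : ℂ)) := by
    rw [hz, map_sum, Finset.sum_mul_sum]
    refine Finset.sum_congr rfl fun n _ => Finset.sum_congr rfl fun m _ => ?_
    rw [← Complex.exp_conj, ← Complex.exp_add]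
    congr 1
    simp [Complex.ofReal_sub, mul_sub]
    ring
  have h2 : (‖z‖)^2 = (z * (starRingEnd ℂ) z).re := by
    rw [Complex.mul_conj, Complex.sq_norm, Complex.ofReal_re]
  rw [h2, h1, Complex.re_sum]
  refine Finset.sum_congr rfl fun n _ => ?_
  rw [Complex.re_sum]
  refine Finset.sum_congr rfl fun m _ => ?_
  rw [mul_comm, Complex.exp_ofReal_mul_I_re]

theorem stmt_13 (rhat : EuclideanSpace ℝ (Fin 3)) (hr : ‖rhat‖ = 1)
    (lam L c : ℝ) (hlam : 0 < lam) (hL : 0 < L) (N : ℕ) (hN : 1 ≤ N)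
    (hc : 0 < c) (hcL : c * L ^ 2 < lam)
    (g : ℝ → ℝ)
    (hg : ∀ a, g a = ‖(∑ n ∈ Finset.Icc 1 N,
        Complex.exp (Complex.I * ((π / lam) * c * ((n : ℝ) ^ 2 / (N : ℝ) ^ 2) * a : ℝ)))‖) :
    AntitoneOn g (Set.Icc 0 (L ^ 2)) ∧
    (∀ t : EuclideanSpace ℝ (Fin 3), ‖t‖ = L →
        g (L ^ 2) ≤ g (L ^ 2 - (inner ℝ rhat t : ℝ) ^ 2)) ∧
    (∀ t : EuclideanSpace ℝ (Fin 3), ‖t‖ = L → (inner ℝ rhat t : ℝ) = 0 →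
        g (L ^ 2 - (inner ℝ rhat t : ℝ) ^ 2) = g (L ^ 2)) := by
  have hNR : (0:ℝ) < (N:ℝ) := by exact_mod_cast Nat.lt_of_lt_of_le Nat.zero_lt_one hN
  have hN2 : (0:ℝ) < (N:ℝ)^2 := by positivity
  set C : ℝ := π * c / (lam * (N:ℝ)^2) with hC
  have hC0 : 0 < C := by
    apply div_pos (mul_pos Real.pi_pos hc) (mul_pos hlam hN2)
  -- main antitone claim
  have hanti : AntitoneOn g (Set.Icc 0 (L ^ 2)) := by
    intro a ha b hb hab
    obtain ⟨ha0, haL⟩ := ha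
    obtain ⟨hb0, hbL⟩ := hb
    have hsq : g b ^ 2 ≤ g a ^ 2 := by
      rw [hg a, hg b,
        abs_sq_sum_exp (Finset.Icc 1 N) (fun n => (π / lam) * c * ((n : ℝ) ^ 2 / (N : ℝ) ^ 2) * b),
        abs_sq_sum_exp (Finset.Icc 1 N) (fun n => (π / lam) * c * ((n : ℝ) ^ 2 / (N : ℝ) ^ 2) * a)]
      refine Finset.sum_le_sum fun n hn => Finset.sum_le_sum fun m hm => ?_
      simp only [Finset.mem_Icc] at hn hm
      have hdiff : ∀ x : ℝ,
          (π / lam) * c * ((n : ℝ) ^ 2 / (N : ℝ) ^ 2) * x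
            - (π / lam) * c * ((m : ℝ) ^ 2 / (N : ℝ) ^ 2) * x
          = C * (((n:ℝ)^2 - (m:ℝ)^2)) * x := by
        intro x
        rw [hC]
        field_simp
      rw [hdiff a, hdiff b]
      -- reduce to cos monotonicity for nonneg d
      have main : ∀ d : ℝ, 0 ≤ d → d ≤ (N:ℝ)^2 →
          Real.cos (C * d * b) ≤ Real.cos (C * d * a) := by
        intro d hd0 hdN
        apply Real.cos_le_cos_of_nonneg_of_le_pi
        · positivity
        · have h1 : C * d * b ≤ C * (N:ℝ)^2 * L^2 := by
            apply mul_le_mul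
            · exact mul_le_mul_of_nonneg_left hdN hC0.le
            · exact hbL
            · exact hb0
            · positivity
          have h2 : C * (N:ℝ)^2 * L^2 ≤ π := by
            rw [hC]
            rw [div_mul_eq_mul_div, div_mul_eq_mul_div, div_le_iff₀ (mul_pos hlam hN2)]
            nlinarith [mul_lt_mul_of_pos_left hcL (mul_pos Real.pi_pos hN2)]
          linarith
        · exact mul_le_mul_of_nonneg_left hab (by positivity)
      set d := (n:ℝ)^2 - (m:ℝ)^2 with hd
      have hbound : |d| ≤ (N:ℝ)^2 := by
        have hn2 : (1:ℝ) ≤ (n:ℝ)^2 ∧ (n:ℝ)^2 ≤ (N:ℝ)^2 := by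
          constructor
          · have : (1:ℝ) ≤ (n:ℝ) := by exact_mod_cast hn.1
            nlinarith
          · have : (n:ℝ) ≤ (N:ℝ) := by exact_mod_cast hn.2
            have h0 : (0:ℝ) ≤ (n:ℝ) := by positivity
            nlinarith
        have hm2 : (1:ℝ) ≤ (m:ℝ)^2 ∧ (m:ℝ)^2 ≤ (N:ℝ)^2 := by
          constructor
          · have : (1:ℝ) ≤ (m:ℝ) := by exact_mod_cast hm.1
            nlinarith
          · have : (m:ℝ) ≤ (N:ℝ) := by exact_mod_cast hm.2
            have h0 : (0:ℝ) ≤ (m:ℝ) := by positivity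
            nlinarith
        obtain ⟨hn21, hn22⟩ := hn2
        obtain ⟨hm21, hm22⟩ := hm2
        rw [abs_le, hd]
        constructor
        · linarith
        · linarith
      rcases le_or_gt 0 d with hd0 | hd0
      · exact main d hd0 (by rwa [abs_of_nonneg hd0] at hbound)
      · have hcos : ∀ x : ℝ, Real.cos (C * d * x) = Real.cos (C * (-d) * x) := by
          intro x
          rw [show C * (-d) * x = -(C * d * x) by ring, Real.cos_neg]
        rw [hcos a, hcos b]
        exact main (-d) (by linarith) (by rwa [abs_of_neg hd0] at hbound)
    have hga : 0 ≤ g a := by rw [hg a]; exact norm_nonneg _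
    exact le_of_pow_le_pow_left₀ two_ne_zero hga hsq
  refine ⟨hanti, fun t ht => ?_, fun t ht h0 => by rw [h0]; norm_num⟩
  have hcs : (inner ℝ rhat t : ℝ)^2 ≤ L^2 := by
    have := abs_real_inner_le_norm rhat t
    rw [hr, ht, one_mul] at this
    calc (inner ℝ rhat t : ℝ)^2 = |(inner ℝ rhat t : ℝ)|^2 := (sq_abs _).symm
      _ ≤ L^2 := by nlinarith [abs_nonneg (inner ℝ rhat t : ℝ)]
  have hip : 0 ≤ (inner ℝ rhat t : ℝ)^2 := sq_nonneg _
  have h1 : (L^2 - (inner ℝ rhat t : ℝ)^2) ∈ Set.Icc (0:ℝ) (L^2) :=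
    Set.mem_Icc.mpr ⟨by linarith, by linarith⟩
  exact hanti h1 (Set.mem_Icc.mpr ⟨by positivity, le_refl _⟩) (by linarith)
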